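/- (Existence and uniqueness for the three-phase Stefan problem with Robin condition, reduced form.) Assume α₂ > α₃, A∞ > B, and h₀ > h₂, where h₂ := ((B−C)/(A∞−B))·√(k₂·k₃·c₂/(π·c₃·α₃))·(1/erf(z₀·√(α₁/α₂))). Then there exists a unique ξ₁ > z₀ such that Q(ξ₁) = T(ξ₂), where ξ₂ ≥ 0 is the unique number satisfying erf(ξ₂·√(α₁/α₂)) = H(ξ₁). -/

import Mathlib

noncomputable section

/-- The error function `erf x = (2/√π) ∫₀ˣ exp(−s²) ds`. -/
def erf (x : ℝ) : ℝ := (2 / Real.sqrt Real.pi) * ∫ s in (0:ℝ)..x, Real.exp (-(s^2))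

/-- The complementary error function. -/
def erfc (x : ℝ) : ℝ := 1 - erf x

/-- Physical data of the three-phase Stefan problem: positive thermal conductivities,
specific heats, mass density, latent heats, and temperatures `B > C > D`. -/
structure Params where
  k₁ : ℝ
  k₂ : ℝ
  k₃ : ℝ
  c₁ : ℝ
  c₂ : ℝ
  c₃ : ℝ
  ρ : ℝ
  ℓ₁ : ℝ
  ℓ₂ : ℝ
  B : ℝ
  C : ℝ
  D : ℝ
  hk₁ : 0 < k₁
  hk₂ : 0 < k₂
  hk₃ : 0 < k₃
  hc₁ : 0 < c₁
  hc₂ : 0 < c₂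
  hc₃ : 0 < c₃
  hρ : 0 < ρ
  hℓ₁ : 0 < ℓ₁
  hℓ₂ : 0 < ℓ₂
  hBC : C < B
  hCD : D < C

namespace Params

/-- Thermal diffusivity of phase 1. -/
def α₁ (p : Params) : ℝ := p.k₁ / (p.ρ * p.c₁)

/-- Thermal diffusivity of phase 2. -/
def α₂ (p : Params) : ℝ := p.k₂ / (p.ρ * p.c₂)

/-- Thermal diffusivity of phase 3. -/
def α₃ (p : Params) : ℝ := p.k₃ / (p.ρ * p.c₃)

/-- Stefan number `Ste₁ = c₁(C−D)/ℓ₁`. -/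
def Ste₁ (p : Params) : ℝ := p.c₁ * (p.C - p.D) / p.ℓ₁

/-- Stefan number `Ste₂ = c₂(B−C)/ℓ₂`. -/
def Ste₂ (p : Params) : ℝ := p.c₂ * (p.B - p.C) / p.ℓ₂

/-- `φ(z) = z + (Ste₁/√π) exp(−z²)/erfc(z)`. -/
def φ (p : Params) (z : ℝ) : ℝ :=
  z + (p.Ste₁ / Real.sqrt Real.pi) * Real.exp (-(z^2)) / erfc z

/-- `H(z) = erf(z√(α₁/α₂)) − (Ste₂/√π)(ℓ₂/ℓ₁)√(k₂c₁/(k₁c₂)) exp(−z²α₁/α₂)/φ(z)`. -/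
def H (p : Params) (z : ℝ) : ℝ :=
  erf (z * Real.sqrt (p.α₁ / p.α₂)) -
    (p.Ste₂ / Real.sqrt Real.pi) * (p.ℓ₂ / p.ℓ₁) *
      Real.sqrt (p.k₂ * p.c₁ / (p.k₁ * p.c₂)) *
      (Real.exp (-(z^2) * (p.α₁ / p.α₂)) / p.φ z)

/-- `Q(z) = (ℓ₁/ℓ₂) φ(z) exp(z² α₁/α₂)`. -/
def Q (p : Params) (z : ℝ) : ℝ :=
  (p.ℓ₁ / p.ℓ₂) * p.φ z * Real.exp (z^2 * (p.α₁ / p.α₂))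

/-- The function `T` arising from the Robin (convective) boundary condition with
heat-transfer coefficient `h₀` and bulk temperature `Ainf`. -/
def T (p : Params) (h₀ Ainf : ℝ) (z : ℝ) : ℝ :=
  (p.Ste₂ / (Real.sqrt Real.pi * p.c₂)) * ((Ainf - p.B) / (p.B - p.C)) *
    Real.sqrt (p.k₃ * p.c₁ * p.c₃ / p.k₁) *
    (Real.exp (-(z^2) * p.α₁ * (1 / p.α₃ - 1 / p.α₂)) /
      (p.k₃ / (h₀ * Real.sqrt (Real.pi * p.α₃)) + erf (z * Real.sqrt (p.α₁ / p.α₃)))) -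
  z * Real.exp (z^2 * (p.α₁ / p.α₂))

/-- The function `V` arising from the Dirichlet boundary condition with temperature `A`. -/
def V (p : Params) (A : ℝ) (z : ℝ) : ℝ :=
  ((A - p.B) / p.ℓ₂) * Real.sqrt (p.c₁ * p.c₃ * p.k₃ / (Real.pi * p.k₁)) *
    (Real.exp (-(z^2) * (p.α₁ / p.α₃ - p.α₁ / p.α₂)) / erf (z * Real.sqrt (p.α₁ / p.α₃))) -
  z * Real.exp (z^2 * (p.α₁ / p.α₂))

/-- The function `P` arising from the Neumann boundary condition with flux coefficient `q₀`. -/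
def P (p : Params) (q₀ : ℝ) (z : ℝ) : ℝ :=
  Real.exp (z^2 * (p.α₁ / p.α₂)) *
    (-z + (q₀ / p.ℓ₂) * Real.sqrt (p.c₁ / (p.ρ * p.k₁)) * Real.exp (-(z^2) * (p.α₁ / p.α₃)))

/-- Critical heat-transfer coefficient `h₂`. -/
def h2 (p : Params) (Ainf z₀ : ℝ) : ℝ :=
  ((p.B - p.C) / (Ainf - p.B)) *
    Real.sqrt (p.k₂ * p.k₃ * p.c₂ / (Real.pi * p.c₃ * p.α₃)) *
    (1 / erf (z₀ * Real.sqrt (p.α₁ / p.α₂)))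

/-- Critical heat-flux coefficient `q₂`. -/
def q2 (p : Params) (z₀ : ℝ) : ℝ :=
  p.k₂ * (p.B - p.C) / (Real.sqrt (p.α₂ * Real.pi) * erf (z₀ * Real.sqrt (p.α₁ / p.α₂)))

end Params


open MeasureTheory Real Set


lemma cont_gauss : Continuous fun s : ℝ => Real.exp (-(s^2)) := by continuity

lemma intgauss : Integrable (fun s : ℝ => Real.exp (-(s^2))) := by
  have := integrable_exp_neg_mul_sq (b := 1) one_pos
  simpa using this

lemma erf_hasDerivAt (x : ℝ) : HasDerivAt erf (2 / Real.sqrt Real.pi * Real.exp (-(x^2))) x := by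
  have h := intervalIntegral.integral_hasStrictDerivAt_right
    (f := fun s : ℝ => Real.exp (-(s^2))) (a := (0:ℝ)) (b := x)
    (intgauss.intervalIntegrable)
    (cont_gauss.stronglyMeasurableAtFilter _ _)
    cont_gauss.continuousAt
  exact ((h.hasDerivAt).const_mul (2 / Real.sqrt Real.pi))

lemma continuous_erf : Continuous erf :=
  continuous_iff_continuousAt.2 fun x => (erf_hasDerivAt x).continuousAt

lemma erf_zero : erf 0 = 0 := by simp [erf]

lemma erf_strictMono : StrictMono erf :=
  strictMono_of_hasDerivAt_pos (f := erf) (f' := fun x => 2 / Real.sqrt Real.pi * Real.exp (-(x^2)))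
    erf_hasDerivAt (fun x => by positivity)

lemma erf_mono : Monotone erf := erf_strictMono.monotone

lemma integral_Ioi_gauss : ∫ s in Ioi (0:ℝ), Real.exp (-(s^2)) = Real.sqrt Real.pi / 2 := by
  have := integral_gaussian_Ioi 1
  simpa using this

lemma intervalIntegral_eq_Ioi_sub (x : ℝ) :
    (∫ s in (0:ℝ)..x, Real.exp (-(s^2)))
      = (∫ s in Ioi (0:ℝ), Real.exp (-(s^2))) - ∫ s in Ioi x, Real.exp (-(s^2)) := by
  have h0 : (∫ s in Iic (0:ℝ), Real.exp (-(s^2))) + ∫ s in Ioi (0:ℝ), Real.exp (-(s^2))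
      = ∫ s : ℝ, Real.exp (-(s^2)) := intervalIntegral.integral_Iic_add_Ioi intgauss.integrableOn intgauss.integrableOn
  have hx : (∫ s in Iic x, Real.exp (-(s^2))) + ∫ s in Ioi x, Real.exp (-(s^2))
      = ∫ s : ℝ, Real.exp (-(s^2)) := intervalIntegral.integral_Iic_add_Ioi intgauss.integrableOn intgauss.integrableOn
  have h := intervalIntegral.integral_Iic_sub_Iic (f := fun s : ℝ => Real.exp (-(s^2)))
    (a := (0:ℝ)) (b := x) intgauss.integrableOn intgauss.integrableOn
  rw [← h]; linarith

lemma erfc_eq (x : ℝ) : erfc x = (2 / Real.sqrt Real.pi) * ∫ s in Ioi x, Real.exp (-(s^2)) := by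
  have hπ : Real.sqrt Real.pi ≠ 0 := by positivity
  rw [erfc, erf, intervalIntegral_eq_Ioi_sub, integral_Ioi_gauss]
  field_simp
  ring

lemma integral_Ioi_gauss_pos (x : ℝ) : 0 < ∫ s in Ioi x, Real.exp (-(s^2)) := by
  rw [setIntegral_pos_iff_support_of_nonneg_ae]
  · have : (Function.support fun s : ℝ => Real.exp (-(s^2))) = univ := by
      ext s; simp [Function.support, Real.exp_ne_zero]
    rw [this, univ_inter]
    simp [Real.volume_Ioi]
  · exact Filter.Eventually.of_forall fun s => (Real.exp_pos _).le
  · exact intgauss.integrableOn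

lemma erfc_pos (x : ℝ) : 0 < erfc x := by
  rw [erfc_eq]
  have := integral_Ioi_gauss_pos x
  positivity

lemma erf_lt_one (x : ℝ) : erf x < 1 := by
  have := erfc_pos x
  rw [erfc] at this; linarith

lemma erf_nonneg {x : ℝ} (hx : 0 ≤ x) : 0 ≤ erf x := by
  rw [← erf_zero]; exact erf_mono hx

lemma erf_pos {x : ℝ} (hx : 0 < x) : 0 < erf x := by
  rw [← erf_zero]; exact erf_strictMono hx

lemma integral_Ioi_s_gauss {z : ℝ} :
    ∫ s in Ioi z, s * Real.exp (-(s^2)) = Real.exp (-(z^2)) / 2 := by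
  have h := MeasureTheory.integral_Ioi_of_hasDerivAt_of_tendsto
    (f := fun s : ℝ => -Real.exp (-(s^2)) / 2) (f' := fun s : ℝ => s * Real.exp (-(s^2)))
    (a := z) (m := 0) ?_ ?_ ?_ ?_
  · rw [h]; ring
  · exact (Continuous.continuousWithinAt (by continuity))
  · intro s hs
    have : HasDerivAt (fun s : ℝ => -Real.exp (-(s^2)) / 2) (-(Real.exp (-(s^2)) * (-(2*s)))/2) s := by
      have h1 : HasDerivAt (fun s : ℝ => -(s^2)) (-(2*s)) s := by
        simpa using ((hasDerivAt_pow 2 s).fun_neg)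
      exact ((h1.exp).neg).div_const 2
    exact this.congr_deriv (by ring)
  · have : IntegrableOn (fun s : ℝ => s * Real.exp (-(1 : ℝ) * s^2)) (Ioi z) :=
      (integrable_mul_exp_neg_mul_sq one_pos).integrableOn
    simpa using this
  · have h1 : Filter.Tendsto (fun s : ℝ => -(s^2)) Filter.atTop Filter.atBot :=
      Filter.tendsto_neg_atTop_atBot.comp (Filter.tendsto_pow_atTop (by norm_num))
    have : Filter.Tendsto (fun s : ℝ => Real.exp (-(s^2))) Filter.atTop (nhds 0) :=
      Real.tendsto_exp_atBot.comp h1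
    simpa [div_eq_mul_inv] using (this.neg.div_const 2)

lemma int_s_gauss : Integrable (fun s : ℝ => s * Real.exp (-(s^2))) := by
  have := integrable_mul_exp_neg_mul_sq (b := 1) one_pos
  simpa using this

lemma gauss_tail_le {z : ℝ} (hz : 0 < z) :
    Real.sqrt Real.pi * z * erfc z ≤ Real.exp (-(z^2)) := by
  have hcomp : (∫ s in Ioi z, Real.exp (-(s^2)))
      ≤ ∫ s in Ioi z, (1/z) * (s * Real.exp (-(s^2))) := by
    apply setIntegral_mono_on intgauss.integrableOn
      (int_s_gauss.integrableOn.const_mul _) measurableSet_Ioi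
    intro s hs
    have hs' : z < s := hs
    have h1 : (1:ℝ) ≤ s / z := (one_le_div hz).2 hs'.le
    have h2 := mul_le_mul_of_nonneg_right h1 (Real.exp_pos (-(s^2))).le
    calc Real.exp (-(s^2)) = 1 * Real.exp (-(s^2)) := (one_mul _).symm
      _ ≤ (s/z) * Real.exp (-(s^2)) := h2
      _ = (1/z) * (s * Real.exp (-(s^2))) := by ring
  rw [MeasureTheory.integral_const_mul, integral_Ioi_s_gauss] at hcomp
  have hπ : (0:ℝ) < Real.sqrt Real.pi := Real.sqrt_pos.2 Real.pi_pos
  rw [erfc_eq]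
  have heq : Real.sqrt Real.pi * z * (2 / Real.sqrt Real.pi * ∫ s in Ioi z, Real.exp (-(s^2)))
      = 2 * z * ∫ s in Ioi z, Real.exp (-(s^2)) := by field_simp
  rw [heq]
  calc 2 * z * ∫ s in Ioi z, Real.exp (-(s^2)) ≤ 2 * z * (1/z * (Real.exp (-(z^2)) / 2)) := by
        apply mul_le_mul_of_nonneg_left hcomp (by positivity)
    _ = Real.exp (-(z^2)) := by field_simp

lemma continuous_erfc : Continuous erfc := (continuous_const.sub continuous_erf)

lemma erfc_hasDerivAt (x : ℝ) :
    HasDerivAt erfc (-(2 / Real.sqrt Real.pi * Real.exp (-(x^2)))) x :=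
  ((erf_hasDerivAt x).const_sub 1)

section G
variable {a c : ℝ}

/-- auxiliary function φ with parameter a -/
def phi (a : ℝ) (z : ℝ) : ℝ := z + a * Real.exp (-(z^2)) / erfc z

/-- auxiliary function G = φ(z) e^{c z²} -/
def Gf (a c : ℝ) (z : ℝ) : ℝ := phi a z * Real.exp (z^2 * c)

lemma continuous_phi : Continuous (phi a) := by
  apply continuous_id.add
  exact ((continuous_const.mul (by continuity : Continuous fun z : ℝ => Real.exp (-(z^2))))).div
    continuous_erfc fun x => (erfc_pos x).ne'

lemma continuous_Gf : Continuous (Gf a c) :=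
  continuous_phi.mul (by continuity)

lemma phi_pos (ha : 0 < a) {z : ℝ} (hz : 0 ≤ z) : 0 < phi a z := by
  have h1 : 0 < a * Real.exp (-(z^2)) / erfc z := by
    have := erfc_pos z; positivity
  unfold phi; linarith

lemma Gf_pos (ha : 0 < a) (hz : 0 ≤ (z:ℝ)) : 0 < Gf a c z := by
  have := phi_pos ha hz
  unfold Gf; positivity

lemma phi_hasDerivAt (z : ℝ) :
    HasDerivAt (phi a)
      (1 + ((a * (Real.exp (-(z^2)) * (-(2*z)))) * erfc z -
        a * Real.exp (-(z^2)) * (-(2 / Real.sqrt Real.pi * Real.exp (-(z^2))))) / (erfc z)^2) z := by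
  have hu : HasDerivAt (fun z : ℝ => a * Real.exp (-(z^2))) (a * (Real.exp (-(z^2)) * (-(2*z)))) z := by
    have h1 : HasDerivAt (fun z : ℝ => -(z^2)) (-(2*z)) z := by
      simpa using (hasDerivAt_pow 2 z).fun_neg
    exact (h1.exp).const_mul a
  have := hu.div (erfc_hasDerivAt z) (erfc_pos z).ne'
  exact (hasDerivAt_id z).add this

lemma phi_deriv_ge_one (ha : 0 ≤ a) {z : ℝ} (hz : 0 ≤ z) :
    1 ≤ 1 + ((a * (Real.exp (-(z^2)) * (-(2*z)))) * erfc z -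
        a * Real.exp (-(z^2)) * (-(2 / Real.sqrt Real.pi * Real.exp (-(z^2))))) / (erfc z)^2 := by
  have hπ : (0:ℝ) < Real.sqrt Real.pi := Real.sqrt_pos.2 Real.pi_pos
  have key : 2 * z * erfc z ≤ 2 / Real.sqrt Real.pi * Real.exp (-(z^2)) := by
    rcases eq_or_lt_of_le hz with h | h
    · simp [← h]
      positivity
    · have := gauss_tail_le h
      rw [div_mul_eq_mul_div, le_div_iff₀ hπ]
      nlinarith [this, (erfc_pos z).le]
  have hnum : 0 ≤ (a * (Real.exp (-(z^2)) * (-(2*z)))) * erfc z -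
        a * Real.exp (-(z^2)) * (-(2 / Real.sqrt Real.pi * Real.exp (-(z^2)))) := by
    have h1 : (a * (Real.exp (-(z^2)) * (-(2*z)))) * erfc z -
        a * Real.exp (-(z^2)) * (-(2 / Real.sqrt Real.pi * Real.exp (-(z^2))))
        = a * Real.exp (-(z^2)) * (2 / Real.sqrt Real.pi * Real.exp (-(z^2)) - 2 * z * erfc z) := by
      ring
    rw [h1]
    have : 0 ≤ 2 / Real.sqrt Real.pi * Real.exp (-(z^2)) - 2 * z * erfc z := by linarith
    positivity
  have : 0 ≤ ((a * (Real.exp (-(z^2)) * (-(2*z)))) * erfc z -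
        a * Real.exp (-(z^2)) * (-(2 / Real.sqrt Real.pi * Real.exp (-(z^2))))) / (erfc z)^2 := by
    apply div_nonneg hnum (sq_nonneg _)
  linarith

lemma Gf_hasDerivAt (z : ℝ) :
    HasDerivAt (Gf a c)
      ((1 + ((a * (Real.exp (-(z^2)) * (-(2*z)))) * erfc z -
        a * Real.exp (-(z^2)) * (-(2 / Real.sqrt Real.pi * Real.exp (-(z^2))))) / (erfc z)^2) *
          Real.exp (z^2 * c) + phi a z * (Real.exp (z^2 * c) * (2 * z * c))) z := by
  have hE : HasDerivAt (fun z : ℝ => Real.exp (z^2 * c)) (Real.exp (z^2 * c) * (2 * z * c)) z := by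
    have h1 : HasDerivAt (fun z : ℝ => z^2 * c) (2 * z * c) z := by
      simpa using (hasDerivAt_pow 2 z).mul_const c
    exact h1.exp
  exact (phi_hasDerivAt z).mul hE

lemma Gf_strictMonoOn (ha : 0 < a) (hc : 0 < c) : StrictMonoOn (Gf a c) (Ici 0) := by
  apply strictMonoOn_of_deriv_pos (convex_Ici 0) (continuous_Gf.continuousOn)
  intro x hx
  rw [interior_Ici] at hx
  have hx' : (0:ℝ) < x := hx
  rw [(Gf_hasDerivAt x).deriv]
  have h1 := phi_deriv_ge_one ha.le (le_of_lt hx')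
  have h2 := phi_pos ha (le_of_lt hx')
  have h3 : (0:ℝ) < Real.exp (x^2 * c) := Real.exp_pos _
  have h4 : (0:ℝ) < 2 * x * c := by positivity
  nlinarith [mul_pos (mul_pos h2 h3) h4]
end G


namespace Params
variable (p : Params)

lemma α₁_pos : 0 < p.α₁ := div_pos p.hk₁ (mul_pos p.hρ p.hc₁)
lemma α₂_pos : 0 < p.α₂ := div_pos p.hk₂ (mul_pos p.hρ p.hc₂)
lemma α₃_pos : 0 < p.α₃ := div_pos p.hk₃ (mul_pos p.hρ p.hc₃)
lemma Ste₁_pos : 0 < p.Ste₁ := div_pos (mul_pos p.hc₁ (by linarith [p.hCD])) p.hℓ₁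
lemma Ste₂_pos : 0 < p.Ste₂ := div_pos (mul_pos p.hc₂ (by linarith [p.hBC])) p.hℓ₂

/-- shorthand constants -/
def aa : ℝ := p.Ste₁ / Real.sqrt Real.pi
def cc : ℝ := p.α₁ / p.α₂
def mm : ℝ := Real.sqrt (p.α₁ / p.α₂)
def KK : ℝ := (p.Ste₂ / Real.sqrt Real.pi) * (p.ℓ₂ / p.ℓ₁) * Real.sqrt (p.k₂ * p.c₁ / (p.k₁ * p.c₂))

lemma aa_pos : 0 < p.aa := div_pos p.Ste₁_pos (Real.sqrt_pos.2 Real.pi_pos)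
lemma cc_pos : 0 < p.cc := div_pos p.α₁_pos p.α₂_pos
lemma mm_pos : 0 < p.mm := Real.sqrt_pos.2 p.cc_pos
lemma mm_sq : p.mm ^ 2 = p.cc := Real.sq_sqrt p.cc_pos.le
lemma KK_pos : 0 < p.KK := by
  rw [KK]
  have h1 : (0:ℝ) < Real.sqrt (p.k₂ * p.c₁ / (p.k₁ * p.c₂)) := Real.sqrt_pos.2 (by
    apply div_pos (mul_pos p.hk₂ p.hc₁) (mul_pos p.hk₁ p.hc₂))
  have := p.Ste₂_pos
  have hπ : (0:ℝ) < Real.sqrt Real.pi := Real.sqrt_pos.2 Real.pi_pos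
  have := p.hℓ₁; have := p.hℓ₂
  positivity

lemma φ_eq : p.φ = phi p.aa := rfl

lemma φ_pos {z : ℝ} (hz : 0 ≤ z) : 0 < p.φ z := by
  rw [φ_eq]; exact phi_pos p.aa_pos hz

lemma Q_eq (z : ℝ) : p.Q z = (p.ℓ₁ / p.ℓ₂) * Gf p.aa p.cc z := by
  rw [Q, φ_eq, Gf, cc]; ring

lemma H_eq {z : ℝ} (hz : 0 ≤ z) : p.H z = erf (z * p.mm) - p.KK / Gf p.aa p.cc z := by
  have hφ : p.φ z ≠ 0 := (p.φ_pos hz).ne'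
  have hE : Real.exp (z^2 * p.cc) ≠ 0 := Real.exp_ne_zero _
  have key : Real.exp (-(z^2) * (p.α₁ / p.α₂)) / p.φ z
      = 1 / (p.φ z * Real.exp (z^2 * p.cc)) := by
    rw [show -(z^2) * (p.α₁ / p.α₂) = -(z^2 * p.cc) by rw [cc]; ring, Real.exp_neg]
    field_simp
  rw [H, mm, KK, Gf, ← φ_eq, key]
  ring

lemma Q_strictMonoOn : StrictMonoOn p.Q (Ici 0) := by
  intro x hx y hy hxy
  rw [Q_eq, Q_eq]
  have h := Gf_strictMonoOn p.aa_pos p.cc_pos hx hy hxy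
  have hl : (0:ℝ) < p.ℓ₁ / p.ℓ₂ := div_pos p.hℓ₁ p.hℓ₂
  exact mul_lt_mul_of_pos_left h hl

lemma continuous_Q : Continuous p.Q := by
  have : p.Q = fun z => (p.ℓ₁ / p.ℓ₂) * Gf p.aa p.cc z := funext p.Q_eq
  rw [this]
  exact continuous_const.mul continuous_Gf

lemma H_strictMonoOn : StrictMonoOn p.H (Ici 0) := by
  intro x hx y hy hxy
  rw [p.H_eq hx, p.H_eq hy]
  have herf : erf (x * p.mm) < erf (y * p.mm) :=
    erf_strictMono (by nlinarith [p.mm_pos, mem_Ici.1 hx])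
  have hGx : 0 < Gf p.aa p.cc x := Gf_pos p.aa_pos hx
  have hG : Gf p.aa p.cc x < Gf p.aa p.cc y := Gf_strictMonoOn p.aa_pos p.cc_pos hx hy hxy
  have hdiv : p.KK / Gf p.aa p.cc y < p.KK / Gf p.aa p.cc x :=
    div_lt_div_of_pos_left p.KK_pos hGx hG
  linarith

lemma continuousOn_H : ContinuousOn p.H (Ici 0) := by
  have h1 : ContinuousOn (fun z => erf (z * p.mm)) (Ici 0) :=
    (continuous_erf.comp (continuous_id.mul continuous_const)).continuousOn
  have h2 : ContinuousOn (fun z => p.KK / Gf p.aa p.cc z) (Ici 0) := by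
    apply ContinuousOn.div continuousOn_const continuous_Gf.continuousOn
    intro x hx
    exact (Gf_pos p.aa_pos hx).ne'
  exact (h1.sub h2).congr fun x hx => p.H_eq hx

lemma H_lt_erf {z : ℝ} (hz : 0 ≤ z) : p.H z < erf (z * p.mm) := by
  rw [p.H_eq hz]
  have hGx : 0 < Gf p.aa p.cc z := Gf_pos p.aa_pos hz
  have : 0 < p.KK / Gf p.aa p.cc z := div_pos p.KK_pos hGx
  linarith

section T
variable {h₀ Ainf : ℝ}

lemma T_den_pos (hh₀ : 0 < h₀) {z : ℝ} (hz : 0 ≤ z) :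
    0 < p.k₃ / (h₀ * Real.sqrt (Real.pi * p.α₃)) + erf (z * Real.sqrt (p.α₁ / p.α₃)) := by
  have h1 : 0 < p.k₃ / (h₀ * Real.sqrt (Real.pi * p.α₃)) := by
    have := p.hk₃
    have h2 : 0 < Real.sqrt (Real.pi * p.α₃) := Real.sqrt_pos.2 (mul_pos Real.pi_pos p.α₃_pos)
    positivity
  have h3 : 0 ≤ erf (z * Real.sqrt (p.α₁ / p.α₃)) := by
    apply erf_nonneg
    positivity
  linarith

lemma T_strictAntiOn (hα : p.α₃ < p.α₂) (hAinf : p.B < Ainf) (hh₀ : 0 < h₀) :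
    StrictAntiOn (p.T h₀ Ainf) (Ici 0) := by
  intro x hx y hy hxy
  have hx0 : (0:ℝ) ≤ x := hx
  have hsq : x^2 < y^2 := by nlinarith
  have hβ : 0 < p.α₁ * (1/p.α₃ - 1/p.α₂) := by
    apply mul_pos p.α₁_pos
    have h1 : 1/p.α₂ < 1/p.α₃ := one_div_lt_one_div_of_lt p.α₃_pos hα
    linarith
  have hK₂ : 0 < (p.Ste₂ / (Real.sqrt Real.pi * p.c₂)) * ((Ainf - p.B) / (p.B - p.C)) *
      Real.sqrt (p.k₃ * p.c₁ * p.c₃ / p.k₁) := by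
    have h1 : 0 < Real.sqrt (p.k₃ * p.c₁ * p.c₃ / p.k₁) := Real.sqrt_pos.2 (by
      apply div_pos (mul_pos (mul_pos p.hk₃ p.hc₁) p.hc₃) p.hk₁)
    have h2 : 0 < (Ainf - p.B) / (p.B - p.C) := div_pos (by linarith) (by linarith [p.hBC])
    have h3 : 0 < p.Ste₂ / (Real.sqrt Real.pi * p.c₂) :=
      div_pos p.Ste₂_pos (mul_pos (Real.sqrt_pos.2 Real.pi_pos) p.hc₂)
    positivity
  have hnum : Real.exp (-(y^2) * p.α₁ * (1/p.α₃ - 1/p.α₂))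
      < Real.exp (-(x^2) * p.α₁ * (1/p.α₃ - 1/p.α₂)) := by
    apply Real.exp_lt_exp.2
    nlinarith
  have hnumy : 0 < Real.exp (-(y^2) * p.α₁ * (1/p.α₃ - 1/p.α₂)) := Real.exp_pos _
  have hdx : 0 < p.k₃ / (h₀ * Real.sqrt (Real.pi * p.α₃)) + erf (x * Real.sqrt (p.α₁ / p.α₃)) :=
    p.T_den_pos hh₀ hx
  have hden : p.k₃ / (h₀ * Real.sqrt (Real.pi * p.α₃)) + erf (x * Real.sqrt (p.α₁ / p.α₃))
      < p.k₃ / (h₀ * Real.sqrt (Real.pi * p.α₃)) + erf (y * Real.sqrt (p.α₁ / p.α₃)) := by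
    have : erf (x * Real.sqrt (p.α₁ / p.α₃)) < erf (y * Real.sqrt (p.α₁ / p.α₃)) := by
      apply erf_strictMono
      have hγ : 0 < Real.sqrt (p.α₁ / p.α₃) := Real.sqrt_pos.2 (div_pos p.α₁_pos p.α₃_pos)
      nlinarith
    linarith
  have hfrac : Real.exp (-(y^2) * p.α₁ * (1/p.α₃ - 1/p.α₂)) /
        (p.k₃ / (h₀ * Real.sqrt (Real.pi * p.α₃)) + erf (y * Real.sqrt (p.α₁ / p.α₃)))
      < Real.exp (-(x^2) * p.α₁ * (1/p.α₃ - 1/p.α₂)) /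
        (p.k₃ / (h₀ * Real.sqrt (Real.pi * p.α₃)) + erf (x * Real.sqrt (p.α₁ / p.α₃))) := by
    rw [div_lt_div_iff₀ (by linarith) hdx]
    nlinarith
  have htail : x * Real.exp (x^2 * (p.α₁/p.α₂)) < y * Real.exp (y^2 * (p.α₁/p.α₂)) := by
    have h1 : Real.exp (x^2 * (p.α₁/p.α₂)) ≤ Real.exp (y^2 * (p.α₁/p.α₂)) := by
      apply Real.exp_le_exp.2
      have := p.cc_pos
      rw [cc] at this
      nlinarith
    calc x * Real.exp (x^2 * (p.α₁/p.α₂)) ≤ x * Real.exp (y^2 * (p.α₁/p.α₂)) := by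
          apply mul_le_mul_of_nonneg_left h1 hx0
      _ < y * Real.exp (y^2 * (p.α₁/p.α₂)) :=
          mul_lt_mul_of_pos_right hxy (Real.exp_pos _)
  rw [T, T]
  have := mul_lt_mul_of_pos_left hfrac hK₂
  linarith

lemma continuousOn_T (hh₀ : 0 < h₀) : ContinuousOn (p.T h₀ Ainf) (Ici 0) := by
  apply ContinuousOn.sub
  · apply ContinuousOn.mul continuousOn_const
    apply ContinuousOn.div (by fun_prop)
    · exact (continuous_const.add (continuous_erf.comp (by fun_prop))).continuousOn
    · intro x hx
      exact (p.T_den_pos hh₀ hx).ne'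
  · fun_prop

lemma T_zero (hh₀ : 0 < h₀) : p.T h₀ Ainf 0
    = (p.Ste₂ / (Real.sqrt Real.pi * p.c₂)) * ((Ainf - p.B) / (p.B - p.C)) *
      Real.sqrt (p.k₃ * p.c₁ * p.c₃ / p.k₁) * (h₀ * Real.sqrt (Real.pi * p.α₃) / p.k₃) := by
  rw [T]
  have h2 : 0 < Real.sqrt (Real.pi * p.α₃) := Real.sqrt_pos.2 (mul_pos Real.pi_pos p.α₃_pos)
  have := p.hk₃
  rw [show (0:ℝ) * Real.sqrt (p.α₁ / p.α₃) = 0 by ring, erf_zero]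
  have hne : h₀ * Real.sqrt (Real.pi * p.α₃) ≠ 0 := by positivity
  field_simp
  simp
  field_simp

end T

section Key
variable {h₀ Ainf z₀ : ℝ}

lemma h2_pos (hAinf : p.B < Ainf) (hz₀ : 0 < z₀) : 0 < p.h2 Ainf z₀ := by
  rw [h2]
  have h1 : 0 < (p.B - p.C) / (Ainf - p.B) := div_pos (by linarith [p.hBC]) (by linarith)
  have h2 : 0 < Real.sqrt (p.k₂ * p.k₃ * p.c₂ / (Real.pi * p.c₃ * p.α₃)) := Real.sqrt_pos.2 (by
    apply div_pos (mul_pos (mul_pos p.hk₂ p.hk₃) p.hc₂)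
      (mul_pos (mul_pos Real.pi_pos p.hc₃) p.α₃_pos))
  have h3 : 0 < erf (z₀ * Real.sqrt (p.α₁ / p.α₂)) :=
    erf_pos (mul_pos hz₀ (Real.sqrt_pos.2 (div_pos p.α₁_pos p.α₂_pos)))
  positivity

lemma Q_z₀_eq (hz₀ : 0 < z₀) (hH : p.H z₀ = 0) :
    p.Q z₀ = (p.ℓ₁ / p.ℓ₂) * p.KK / erf (z₀ * p.mm) := by
  have hE : erf (z₀ * p.mm) = p.KK / Gf p.aa p.cc z₀ := by
    have := p.H_eq (z := z₀) hz₀.le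
    rw [hH] at this
    linarith
  have hG : 0 < Gf p.aa p.cc z₀ := Gf_pos p.aa_pos hz₀.le
  have hKK := p.KK_pos.ne'
  rw [p.Q_eq, hE]
  rw [div_div_eq_mul_div, mul_right_comm, mul_div_cancel_right₀ _ hKK]

lemma sqrt_identity :
    Real.sqrt (p.k₂ * p.k₃ * p.c₂ / (Real.pi * p.c₃ * p.α₃)) *
      Real.sqrt (p.k₃ * p.c₁ * p.c₃ / p.k₁) * Real.sqrt (Real.pi * p.α₃)
    = Real.sqrt (p.k₂ * p.c₁ / (p.k₁ * p.c₂)) * (p.c₂ * p.k₃) := by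
  have hα := p.α₃_pos
  have hπ := Real.pi_pos
  have hc1 := p.hc₁; have hc2 := p.hc₂; have hc3 := p.hc₃
  have hk1 := p.hk₁; have hk2 := p.hk₂; have hk3 := p.hk₃
  have h1 : (0:ℝ) ≤ p.k₂ * p.k₃ * p.c₂ / (Real.pi * p.c₃ * p.α₃) := by positivity
  have h2 : (0:ℝ) ≤ p.k₃ * p.c₁ * p.c₃ / p.k₁ := by positivity
  have h4 : (0:ℝ) ≤ p.k₂ * p.c₁ / (p.k₁ * p.c₂) := by positivity
  rw [← Real.sqrt_mul h1, ← Real.sqrt_mul (mul_nonneg h1 h2)]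
  have h5 : Real.sqrt (p.k₂ * p.c₁ / (p.k₁ * p.c₂)) * (p.c₂ * p.k₃)
      = Real.sqrt ((p.k₂ * p.c₁ / (p.k₁ * p.c₂)) * (p.c₂ * p.k₃)^2) := by
    rw [Real.sqrt_mul h4, Real.sqrt_sq (by positivity : (0:ℝ) ≤ p.c₂ * p.k₃)]
  rw [h5]
  congr 1
  field_simp

lemma key_ineq (hz₀ : 0 < z₀) (hH : p.H z₀ = 0) (hAinf : p.B < Ainf)
    (hh₀ : p.h2 Ainf z₀ < h₀) : p.Q z₀ < p.T h₀ Ainf 0 := by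
  have hh₀pos : 0 < h₀ := lt_trans (p.h2_pos hAinf hz₀) hh₀
  set W : ℝ := (p.Ste₂ / (Real.sqrt Real.pi * p.c₂)) * ((Ainf - p.B) / (p.B - p.C)) *
      Real.sqrt (p.k₃ * p.c₁ * p.c₃ / p.k₁) * (Real.sqrt (Real.pi * p.α₃) / p.k₃) with hW
  set E : ℝ := erf (z₀ * Real.sqrt (p.α₁ / p.α₂)) with hEdef
  have hE : 0 < E :=
    erf_pos (mul_pos hz₀ (Real.sqrt_pos.2 (div_pos p.α₁_pos p.α₂_pos)))
  have hπ : (0:ℝ) < Real.sqrt Real.pi := Real.sqrt_pos.2 Real.pi_pos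
  have hBC : p.B - p.C ≠ 0 := by have := p.hBC; intro h; linarith
  have hAB : Ainf - p.B ≠ 0 := by intro h; linarith
  have hWpos : 0 < W := by
    rw [hW]
    have h1 : 0 < Real.sqrt (p.k₃ * p.c₁ * p.c₃ / p.k₁) := Real.sqrt_pos.2 (by
      apply div_pos (mul_pos (mul_pos p.hk₃ p.hc₁) p.hc₃) p.hk₁)
    have h2 : 0 < (Ainf - p.B) / (p.B - p.C) := div_pos (by linarith) (by linarith [p.hBC])
    have h3 : 0 < p.Ste₂ / (Real.sqrt Real.pi * p.c₂) :=
      div_pos p.Ste₂_pos (mul_pos hπ p.hc₂)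
    have h4 : 0 < Real.sqrt (Real.pi * p.α₃) / p.k₃ :=
      div_pos (Real.sqrt_pos.2 (mul_pos Real.pi_pos p.α₃_pos)) p.hk₃
    positivity
  have hT0 : p.T h₀ Ainf 0 = h₀ * W := by
    rw [p.T_zero hh₀pos, hW]; ring
  have cancel1 : (p.B - p.C)/(Ainf - p.B) * ((Ainf - p.B)/(p.B - p.C)) = 1 := by
    field_simp
  have hQW : p.Q z₀ = p.h2 Ainf z₀ * W := by
    have hL : p.Q z₀ = (p.Ste₂ / Real.sqrt Real.pi) *
        Real.sqrt (p.k₂ * p.c₁ / (p.k₁ * p.c₂)) / E := by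
      rw [p.Q_z₀_eq hz₀ hH, KK, mm, ← hEdef]
      have := p.hℓ₁.ne'; have := p.hℓ₂.ne'
      field_simp
    rw [hL]
    calc (p.Ste₂ / Real.sqrt Real.pi) * Real.sqrt (p.k₂ * p.c₁ / (p.k₁ * p.c₂)) / E
        = (p.Ste₂ / (Real.sqrt Real.pi * p.c₂)) * (1/E) *
            (Real.sqrt (p.k₂ * p.c₁ / (p.k₁ * p.c₂)) * (p.c₂ * p.k₃)) * (1/p.k₃) * 1 := by
          have := p.hc₂.ne'; have := p.hk₃.ne'
          field_simp
      _ = (p.Ste₂ / (Real.sqrt Real.pi * p.c₂)) * (1/E) *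
            (Real.sqrt (p.k₂ * p.k₃ * p.c₂ / (Real.pi * p.c₃ * p.α₃)) *
              Real.sqrt (p.k₃ * p.c₁ * p.c₃ / p.k₁) * Real.sqrt (Real.pi * p.α₃)) * (1/p.k₃) *
            ((p.B - p.C)/(Ainf - p.B) * ((Ainf - p.B)/(p.B - p.C))) := by
          rw [p.sqrt_identity, cancel1]
      _ = p.h2 Ainf z₀ * W := by
          rw [h2, hW, ← hEdef]
          ring
  rw [hT0, hQW]
  exact mul_lt_mul_of_pos_right hh₀ hWpos

end Key

end Params


/-- existence and uniqueness for the reduced Robin problem: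
if `α₂ > α₃`, `A∞ > B` and `h₀ > h₂`, there is a unique `ξ₁ > z₀` with `Q(ξ₁) = T(ξ₂)`,
where `ξ₂ ≥ 0` is the unique number with `erf(ξ₂√(α₁/α₂)) = H(ξ₁)`. -/
theorem robin_exists_unique (p : Params) (h₀ Ainf z₀ : ℝ)
    (hα : p.α₃ < p.α₂) (hAinf : p.B < Ainf)
    (hz₀ : 0 < z₀ ∧ p.H z₀ = 0)
    (hh₀ : p.h2 Ainf z₀ < h₀) :
    ∃! ξ₁ : ℝ, z₀ < ξ₁ ∧ ∃ ξ₂ : ℝ, 0 ≤ ξ₂ ∧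
      erf (ξ₂ * Real.sqrt (p.α₁ / p.α₂)) = p.H ξ₁ ∧
      p.Q ξ₁ = p.T h₀ Ainf ξ₂ := by
  obtain ⟨hz₀pos, hz₀H⟩ := hz₀
  have hh₀pos : 0 < h₀ := lt_trans (p.h2_pos hAinf hz₀pos) hh₀
  have hmm : 0 < p.mm := p.mm_pos
  have hmmeq : Real.sqrt (p.α₁ / p.α₂) = p.mm := rfl
  -- H is monotone on Ici 0 and H z₀ = 0
  have hHmono := p.H_strictMonoOn
  have hz₀mem : z₀ ∈ Ici (0:ℝ) := hz₀pos.le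
  -- injectivity of t ↦ erf (t * mm)
  have hinj : ∀ s t : ℝ, erf (s * p.mm) = erf (t * p.mm) → s = t := by
    intro s t h
    have := erf_strictMono.injective h
    exact mul_right_cancel₀ hmm.ne' this
  -- existence of ξ₂ function
  have hex : ∀ x : ℝ, ∃ t : ℝ, z₀ ≤ x → (0 ≤ t ∧ t ≤ x ∧ erf (t * p.mm) = p.H x) := by
    intro x
    by_cases hx : z₀ ≤ x
    · have hx0 : (0:ℝ) ≤ x := le_trans hz₀pos.le hx
      have hxmem : x ∈ Ici (0:ℝ) := hx0
      have hcont : ContinuousOn (fun t : ℝ => erf (t * p.mm)) (Icc 0 x) :=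
        (continuous_erf.comp (continuous_id.mul continuous_const)).continuousOn
      have hlow : erf ((0:ℝ) * p.mm) ≤ p.H x := by
        rw [zero_mul, erf_zero, ← hz₀H]
        rcases eq_or_lt_of_le hx with he | hlt
        · rw [he]
        · exact (hHmono hz₀mem hxmem hlt).le
      have hhigh : p.H x ≤ erf (x * p.mm) := (p.H_lt_erf hx0).le
      have := intermediate_value_Icc hx0 hcont (Set.mem_Icc.2 ⟨hlow, hhigh⟩)
      obtain ⟨t, ht, hterf⟩ := this
      exact ⟨t, fun _ => ⟨ht.1, ht.2, hterf⟩⟩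
    · exact ⟨0, fun hc => absurd hc hx⟩
  choose g hg using hex
  have hg0 : ∀ x, z₀ ≤ x → 0 ≤ g x := fun x hx => (hg x hx).1
  have hgz₀ : g z₀ = 0 := by
    apply hinj
    rw [(hg z₀ le_rfl).2.2, hz₀H, zero_mul, erf_zero]
  have hgmono : ∀ x y, z₀ ≤ x → x < y → g x < g y := by
    intro x y hx hxy
    have h1 : p.H x < p.H y :=
      hHmono (le_trans hz₀pos.le hx) (by exact le_trans hz₀pos.le (hx.trans hxy.le)) hxy
    have h2 : erf (g x * p.mm) < erf (g y * p.mm) := by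
      rw [(hg x hx).2.2, (hg y (hx.trans hxy.le)).2.2]; exact h1
    have := erf_strictMono.lt_iff_lt.1 h2
    exact lt_of_mul_lt_mul_right this hmm.le
  have hgsm : StrictMonoOn g (Ici z₀) := fun x hx y _ hxy => hgmono x y hx hxy
  -- surjectivity of g onto values
  have hsurj : ∀ x, z₀ ≤ x → ∀ v, 0 ≤ v → v ≤ g x → ∃ y, z₀ ≤ y ∧ y ≤ x ∧ g y = v := by
    intro x hx v hv hvg
    have hx0 : (0:ℝ) ≤ x := le_trans hz₀pos.le hx
    have hcont : ContinuousOn p.H (Icc z₀ x) :=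
      p.continuousOn_H.mono (fun t ht => le_trans hz₀pos.le ht.1)
    have hlow : p.H z₀ ≤ erf (v * p.mm) := by
      rw [hz₀H]
      exact erf_nonneg (by positivity)
    have hhigh : erf (v * p.mm) ≤ p.H x := by
      rw [← (hg x hx).2.2]
      exact erf_mono (mul_le_mul_of_nonneg_right hvg hmm.le)
    obtain ⟨y, hy, hyH⟩ := intermediate_value_Icc hx hcont (Set.mem_Icc.2 ⟨hlow, hhigh⟩)
    refine ⟨y, hy.1, hy.2, hinj _ _ ?_⟩
    rw [(hg y hy.1).2.2, hyH]
  -- continuity of g on Ici z₀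
  have hgright : ∀ a, z₀ ≤ a → ∀ b > g a, ∃ c ∈ Ici z₀, g c ∈ Ioc (g a) b := by
    intro a ha b hb
    by_cases hcase : g (a+1) ≤ b
    · exact ⟨a+1, le_trans ha (by linarith), hgmono a (a+1) ha (by linarith), hcase⟩
    · push_neg at hcase
      obtain ⟨y, hy1, hy2, hy3⟩ := hsurj (a+1) (le_trans ha (by linarith)) b
        (le_trans (hg0 a ha) hb.le) hcase.le
      exact ⟨y, hy1, by rw [hy3]; exact ⟨hb, le_rfl⟩⟩
  have hgcont : ContinuousOn g (Ici z₀) := by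
    intro x hx
    rcases eq_or_lt_of_le (mem_Ici.1 hx) with he | hlt
    · rw [← he]
      exact StrictMonoOn.continuousWithinAt_right_of_exists_between hgsm
        self_mem_nhdsWithin (hgright z₀ le_rfl)
    · apply ContinuousAt.continuousWithinAt
      apply StrictMonoOn.continuousAt_of_exists_between hgsm (Ici_mem_nhds hlt)
      · intro b hb
        by_cases hbb : b ≤ 0
        · refine ⟨z₀, mem_Ici.2 le_rfl, ?_⟩
          rw [hgz₀]
          exact ⟨hbb, hgz₀ ▸ hgmono z₀ x le_rfl hlt⟩
        · push_neg at hbb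
          obtain ⟨y, hy1, hy2, hy3⟩ := hsurj x hlt.le b hbb.le hb.le
          exact ⟨y, hy1, by rw [hy3]; exact ⟨le_rfl, hb⟩⟩
      · exact hgright x hlt.le
  -- the function F
  set F : ℝ → ℝ := fun x => p.Q x - p.T h₀ Ainf (g x) with hF
  have hFz₀ : F z₀ < 0 := by
    rw [hF]
    simp only
    rw [hgz₀]
    have := p.key_ineq hz₀pos hz₀H hAinf hh₀
    linarith
  -- upper point
  set b : ℝ := max (z₀+1) ((p.ℓ₂/p.ℓ₁) * p.T h₀ Ainf 0 + 1) with hbdef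
  have hbz₀ : z₀ < b := lt_of_lt_of_le (by linarith) (le_max_left _ _)
  have hQb : p.T h₀ Ainf 0 < p.Q b := by
    have hb0 : 0 < b := lt_trans hz₀pos hbz₀
    have hφ : b ≤ p.φ b := by
      rw [Params.φ]
      have h1 : 0 ≤ p.Ste₁ / Real.sqrt Real.pi * Real.exp (-(b^2)) / erfc b := by
        have := erfc_pos b
        have := p.Ste₁_pos
        have hπ : (0:ℝ) < Real.sqrt Real.pi := Real.sqrt_pos.2 Real.pi_pos
        positivity
      linarith
    have hE1 : 1 ≤ Real.exp (b^2 * (p.α₁/p.α₂)) := by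
      rw [← Real.exp_zero]
      apply Real.exp_le_exp.2
      have := p.cc_pos
      rw [Params.cc] at this
      positivity
    have hl : 0 < p.ℓ₁ / p.ℓ₂ := div_pos p.hℓ₁ p.hℓ₂
    have h2 : (p.ℓ₁/p.ℓ₂) * b ≤ p.Q b := by
      rw [Params.Q]
      have hφpos : 0 < p.φ b := p.φ_pos hb0.le
      calc (p.ℓ₁/p.ℓ₂) * b ≤ (p.ℓ₁/p.ℓ₂) * p.φ b := mul_le_mul_of_nonneg_left hφ hl.le
        _ = (p.ℓ₁/p.ℓ₂) * p.φ b * 1 := by ring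
        _ ≤ (p.ℓ₁/p.ℓ₂) * p.φ b * Real.exp (b^2 * (p.α₁/p.α₂)) := by
            apply mul_le_mul_of_nonneg_left hE1 (by positivity)
    have h3 : p.T h₀ Ainf 0 < (p.ℓ₁/p.ℓ₂) * b := by
      have hb2 : (p.ℓ₂/p.ℓ₁) * p.T h₀ Ainf 0 + 1 ≤ b := le_max_right _ _
      have hll : 0 < p.ℓ₂ / p.ℓ₁ := div_pos p.hℓ₂ p.hℓ₁
      have := mul_le_mul_of_nonneg_left hb2 hl.le
      have hcalc : (p.ℓ₁/p.ℓ₂) * ((p.ℓ₂/p.ℓ₁) * p.T h₀ Ainf 0 + 1)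
          = p.T h₀ Ainf 0 + p.ℓ₁/p.ℓ₂ := by
        have hne1 := p.hℓ₁.ne'
        have hne2 := p.hℓ₂.ne'
        field_simp
      nlinarith
    linarith
  have hFb : 0 < F b := by
    rw [hF]
    simp only
    have hTle : p.T h₀ Ainf (g b) ≤ p.T h₀ Ainf 0 := by
      rcases eq_or_lt_of_le (hg0 b hbz₀.le) with he | hlt
      · rw [← he]
      · exact ((p.T_strictAntiOn hα hAinf hh₀pos) (le_refl (0:ℝ)) (hg0 b hbz₀.le) hlt).le
    linarith
  -- IVT for F
  have hFcont : ContinuousOn F (Icc z₀ b) := by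
    apply ContinuousOn.sub (p.continuous_Q.continuousOn)
    apply ContinuousOn.comp (p.continuousOn_T hh₀pos) (hgcont.mono (fun t ht => ht.1))
    intro t ht
    exact hg0 t ht.1
  obtain ⟨ξ₁, hξ₁mem, hξ₁F⟩ := intermediate_value_Icc hbz₀.le hFcont
    (Set.mem_Icc.2 ⟨hFz₀.le, hFb.le⟩)
  have hξ₁gt : z₀ < ξ₁ := by
    rcases eq_or_lt_of_le hξ₁mem.1 with he | h
    · exfalso
      rw [← he] at hξ₁F
      rw [hξ₁F] at hFz₀
      exact lt_irrefl 0 hFz₀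
    · exact h
  -- the key uniqueness step
  have huniq : ∀ u v, z₀ < u → u < v → p.Q u = p.T h₀ Ainf (g u) →
      p.Q v = p.T h₀ Ainf (g v) → False := by
    intro u v hu huv hQu hQv
    have hu0 : (0:ℝ) ≤ u := le_trans hz₀pos.le hu.le
    have hv0 : (0:ℝ) ≤ v := le_trans hu0 huv.le
    have h1 : p.Q u < p.Q v := p.Q_strictMonoOn hu0 hv0 huv
    have h2 : g u < g v := hgmono u v hu.le huv
    have h3 : p.T h₀ Ainf (g v) < p.T h₀ Ainf (g u) :=
      (p.T_strictAntiOn hα hAinf hh₀pos) (hg0 u hu.le) (hg0 v (hu.le.trans huv.le)) h2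
    linarith
  refine ⟨ξ₁, ⟨hξ₁gt, g ξ₁, hg0 ξ₁ hξ₁gt.le, ?_, by rw [hF] at hξ₁F; simp only at hξ₁F; linarith⟩, ?_⟩
  · rw [hmmeq]
    exact (hg ξ₁ hξ₁gt.le).2.2
  · rintro y ⟨hy, t, ht0, hterf, hQT⟩
    have hty : t = g y := by
      apply hinj
      rw [hmmeq] at hterf
      rw [hterf, (hg y hy.le).2.2]
    rw [hty] at hQT
    have hξ₁eq : p.Q ξ₁ = p.T h₀ Ainf (g ξ₁) := by
      rw [hF] at hξ₁F; simp only at hξ₁F; linarith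
    rcases lt_trichotomy y ξ₁ with h | h | h
    · exact absurd (huniq y ξ₁ hy h hQT hξ₁eq) not_false
    · exact h
    · exact absurd (huniq ξ₁ y hξ₁gt h hξ₁eq hQT) not_false
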